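/- Let A be a unital algebra over ℂ, M a unital A-bimodule, and m, n positive integers with m ≠ n. If δ : A → M is an (m,n)-Jordan derivable mapping at zero with δ(1) = 0, then for every A ∈ A and every idempotent P ∈ A, δ(PA) = δ(AP) = δ(A)·P = P·δ(A). -/
import Mathlib


open MulOpposite

/-- For an `(m,n)`-Jordan derivable mapping at zero with `δ 1 = 0`:
`δ(PA) = δ(AP) = δ(A)·P = P·δ(A)` for every idempotent `P`. -/
theorem mn_jordan_derivable_at_zero_idempotent_comm
    {A M : Type*} [Ring A] [Algebra ℂ A]
    [AddCommGroup M] [Module ℂ M] [Module A M] [Module Aᵐᵒᵖ M]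
    [SMulCommClass A Aᵐᵒᵖ M]
    (m n : ℕ) (hm : 0 < m) (hn : 0 < n) (hmn : m ≠ n)
    (δ : A → M) (hadd : ∀ a b : A, δ (a + b) = δ a + δ b)
    (hδ1 : δ 1 = 0)
    (hzero : ∀ X Y : A, X * Y = 0 → Y * X = 0 →
      (m + n) • δ (X * Y + Y * X) =
        (2 * m) • (op Y • δ X) + (2 * m) • (op X • δ Y)
          + (2 * n) • (X • δ Y) + (2 * n) • (Y • δ X))
    (P : A) (hP : P * P = P) (a : A) :
    δ (P * a) = δ (a * P) ∧ δ (a * P) = op P • δ a ∧ op P • δ a = P • δ a := by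
  -- cancellation of nonzero integer scalars (M is a ℂ-vector space, hence torsion-free)
  have cancel : ∀ k : ℤ, k ≠ 0 → ∀ v : M, k • v = 0 → v = 0 := by
    intro k hk v hv
    rw [← Int.cast_smul_eq_zsmul ℂ] at hv
    have h2 := congrArg (fun w => ((k : ℂ))⁻¹ • w) hv
    simpa [smul_smul, inv_mul_cancel₀ (show (k:ℂ) ≠ 0 from Int.cast_ne_zero.mpr hk)] using h2
  have hδ0 : δ 0 = 0 := by
    have h := hadd 0 0
    rw [add_zero] at h
    exact left_eq_add.mp h
  have hneg : ∀ x : A, δ (-x) = -δ x := by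
    intro x
    have h := hadd x (-x)
    rw [add_neg_cancel, hδ0] at h
    exact eq_neg_of_add_eq_zero_right h.symm
  have hsub : ∀ x y : A, δ (x - y) = δ x - δ y := by
    intro x y
    simp only [sub_eq_add_neg, hadd, hneg]
  -- the zero-product identity, over ℤ
  have hE : ∀ X Y : A, X * Y = 0 → Y * X = 0 →
      (m:ℤ) • (op Y • δ X) + (m:ℤ) • (op X • δ Y) + (n:ℤ) • (X • δ Y)
        + (n:ℤ) • (Y • δ X) = 0 := by
    intro X Y h1 h2
    have h := hzero X Y h1 h2
    rw [h1, h2, add_zero, hδ0, smul_zero] at h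
    have h' : (0:M) = ((2*m : ℕ):ℤ) • (op Y • δ X) + ((2*m:ℕ):ℤ) • (op X • δ Y)
        + ((2*n:ℕ):ℤ) • (X • δ Y) + ((2*n:ℕ):ℤ) • (Y • δ X) := by
      rw [natCast_zsmul, natCast_zsmul, natCast_zsmul, natCast_zsmul]; exact h
    push_cast at h'
    apply cancel 2 (by norm_num)
    generalize op Y • δ X = w at h' ⊢
    generalize op X • δ Y = x at h' ⊢
    generalize X • δ Y = y at h' ⊢
    generalize Y • δ X = z at h' ⊢
    linear_combination (norm := module) -h'
  -- basic action algebra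
  have hoo : ∀ v : M, op P • (op P • v) = op P • v := by
    intro v; rw [smul_smul, ← op_mul, hP]
  have hll : ∀ v : M, P • (P • v) = P • v := by
    intro v; rw [smul_smul, hP]
  have hcm : ∀ v : M, op P • (P • v) = P • (op P • v) := fun v => (smul_comm P (op P) v).symm
  have hozm : ∀ (k : ℤ) (v : M), op P • (k • v) = k • (op P • v) := fun k v => smul_comm _ _ _
  have hlzm : ∀ (k : ℤ) (v : M), P • (k • v) = k • (P • v) := fun k v => smul_comm _ _ _
  -- key cancellation lemmas
  have keyA : ∀ v : M, ((m:ℤ)+(n:ℤ)) • v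
      = (2*(m:ℤ)) • (op P • v) + (2*(n:ℤ)) • (P • v) → v = 0 := by
    intro v hv
    have h1 : ((m:ℤ)+n) • (op P • v)
        = (2*(m:ℤ)) • (op P • v) + (2*(n:ℤ)) • (P • (op P • v)) := by
      have h := congrArg (fun w => op P • w) hv
      simpa only [smul_add, hozm, hoo, hcm] using h
    have h2 : ((m:ℤ)+n) • (P • v)
        = (2*(m:ℤ)) • (P • (op P • v)) + (2*(n:ℤ)) • (P • v) := by
      have h := congrArg (fun w => P • w) hv
      simpa only [smul_add, hlzm, hll] using h
    have h3 : ((m:ℤ)+n) • (P • (op P • v))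
        = (2*(m:ℤ)) • (P • (op P • v)) + (2*(n:ℤ)) • (P • (op P • v)) := by
      have h := congrArg (fun w => P • w) h1
      simpa only [smul_add, hlzm, hll] using h
    generalize op P • v = r at hv h1 h2 h3
    generalize P • v = l at hv h2
    generalize P • r = c at h1 h2 h3
    have hc : c = 0 := by
      apply cancel ((m:ℤ)+n) (by omega)
      linear_combination (norm := module) -h3
    have hr : r = 0 := by
      apply cancel ((n:ℤ)-m) (by omega)
      linear_combination (norm := module) h1 + (2*(n:ℤ)) • hc
    have hl : l = 0 := by
      apply cancel ((m:ℤ)-n) (by omega)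
      linear_combination (norm := module) h2 + (2*(m:ℤ)) • hc
    apply cancel ((m:ℤ)+n) (by omega)
    linear_combination (norm := module) hv + (2*(m:ℤ)) • hr + (2*(n:ℤ)) • hl
  have keyB : ∀ v : M, (m:ℤ) • (op P • v) + (n:ℤ) • (P • v) = 0 →
      op P • v = 0 ∧ P • v = 0 := by
    intro v hv
    have h1 : (m:ℤ) • (op P • v) + (n:ℤ) • (P • (op P • v)) = 0 := by
      have h := congrArg (fun w => op P • w) hv
      simpa only [smul_add, hozm, hoo, hcm, smul_zero] using h
    have h2 : (m:ℤ) • (P • (op P • v)) + (n:ℤ) • (P • v) = 0 := by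
      have h := congrArg (fun w => P • w) hv
      simpa only [smul_add, hlzm, hll, smul_zero] using h
    have h3 : (m:ℤ) • (P • (op P • v)) + (n:ℤ) • (P • (op P • v)) = 0 := by
      have h := congrArg (fun w => P • w) h1
      simpa only [smul_add, hlzm, hll, smul_zero] using h
    generalize op P • v = r at hv h1 h2 h3 ⊢
    generalize P • v = l at hv h2 ⊢
    generalize P • r = c at h1 h2 h3
    have hc : c = 0 := by
      apply cancel ((m:ℤ)+n) (by omega)
      linear_combination (norm := module) h3
    constructor
    · apply cancel (m:ℤ) (by omega)
      linear_combination (norm := module) h1 - (n:ℤ) • hc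
    · apply cancel (n:ℤ) (by omega)
      linear_combination (norm := module) h2 - (m:ℤ) • hc
  have keyC : ∀ v : M, ((m:ℤ)+n) • v = (m:ℤ) • (op P • v) + (n:ℤ) • (P • v) →
      op P • v = v ∧ P • v = v := by
    intro v hv
    have h1 : ((m:ℤ)+n) • (op P • v)
        = (m:ℤ) • (op P • v) + (n:ℤ) • (P • (op P • v)) := by
      have h := congrArg (fun w => op P • w) hv
      simpa only [smul_add, hozm, hoo, hcm] using h
    have h2 : ((m:ℤ)+n) • (P • v)
        = (m:ℤ) • (P • (op P • v)) + (n:ℤ) • (P • v) := by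
      have h := congrArg (fun w => P • w) hv
      simpa only [smul_add, hlzm, hll] using h
    generalize op P • v = r at hv h1 h2 ⊢
    generalize P • v = l at hv h2 ⊢
    generalize P • r = c at h1 h2
    have hrc : r - c = 0 := by
      apply cancel (n:ℤ) (by omega)
      linear_combination (norm := module) h1
    have hlc : l - c = 0 := by
      apply cancel (m:ℤ) (by omega)
      linear_combination (norm := module) h2
    have hvc : v - c = 0 := by
      apply cancel ((m:ℤ)+n) (by omega)
      linear_combination (norm := module) hv + (m:ℤ) • hrc + (n:ℤ) • hlc
    rw [sub_eq_zero] at hrc hlc hvc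
    exact ⟨hrc.trans hvc.symm, hlc.trans hvc.symm⟩
  -- δ P = 0
  have hPQ : P * (1 - P) = 0 := by rw [mul_sub, mul_one, hP, sub_self]
  have hQP : (1 - P) * P = 0 := by rw [sub_mul, one_mul, hP, sub_self]
  have hQneg : δ (1 - P) = -δ P := by rw [hsub, hδ1, zero_sub]
  have hDP : δ P = 0 := by
    have h := hE P (1 - P) hPQ hQP
    rw [hQneg] at h
    simp only [op_sub, op_one, sub_smul, one_smul, smul_neg] at h
    apply keyA
    generalize δ P = u at h ⊢
    generalize op P • u = r at h ⊢
    generalize P • u = l at h ⊢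
    linear_combination (norm := module) h
  have hQ0 : δ (1 - P) = 0 := by rw [hQneg, hDP, neg_zero]
  -- δ vanishes on off-diagonal elements
  have key12 : ∀ x : A, P * x + x * P = x → x * x = 0 → δ x = 0 := by
    intro x hx hx2
    have pf1 : (P + x) * (1 - P - x) = 0 := by
      have e : (P + x) * (1 - P - x) = x - (P * x + x * P) + (P - P * P) - x * x := by
        noncomm_ring
      rw [e, hx, hP, hx2]; simp
    have pf2 : (1 - P - x) * (P + x) = 0 := by
      have e : (1 - P - x) * (P + x) = x - (P * x + x * P) + (P - P * P) - x * x := by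
        noncomm_ring
      rw [e, hx, hP, hx2]; simp
    have pf3 : (P - x) * (1 - P + x) = 0 := by
      have e : (P - x) * (1 - P + x) = (P * x + x * P) - x + (P - P * P) - x * x := by
        noncomm_ring
      rw [e, hx, hP, hx2]; simp
    have pf4 : (1 - P + x) * (P - x) = 0 := by
      have e : (1 - P + x) * (P - x) = (P * x + x * P) - x + (P - P * P) - x * x := by
        noncomm_ring
      rw [e, hx, hP, hx2]; simp
    have hu1 : δ (P + x) = δ x := by rw [hadd, hDP, zero_add]
    have hu2 : δ (1 - P - x) = -δ x := by rw [hsub, hQ0, zero_sub]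
    have hu3 : δ (P - x) = -δ x := by rw [hsub, hDP, zero_sub]
    have hu4 : δ (1 - P + x) = δ x := by rw [hadd, hQ0, zero_add]
    have hI := hE (P + x) (1 - P - x) pf1 pf2
    rw [hu1, hu2] at hI
    simp only [op_sub, op_add, op_one, sub_smul, add_smul, one_smul, smul_neg] at hI
    have hII := hE (P - x) (1 - P + x) pf3 pf4
    rw [hu3, hu4] at hII
    simp only [op_sub, op_add, op_one, sub_smul, add_smul, one_smul, smul_neg] at hII
    apply keyA
    generalize δ x = u at hI hII ⊢
    generalize op P • u = r at hI hII ⊢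
    generalize P • u = l at hI hII ⊢
    generalize op x • u = s at hI hII
    generalize x • u = t at hI hII
    have h2 : (2:ℤ) • (((m:ℤ)+n) • u - ((2*(m:ℤ)) • r + (2*(n:ℤ)) • l)) = 0 := by
      linear_combination (norm := module) hI - hII
    have h3 := cancel 2 (by norm_num) _ h2
    linear_combination (norm := module) h3
  -- algebra of Peirce components
  have hP' : ∀ y : A, P * (P * y) = P * y := fun y => by rw [← mul_assoc, hP]
  have hx12 : P * (P*a - P*a*P) + (P*a - P*a*P) * P = P*a - P*a*P := by
    simp only [mul_sub, sub_mul, mul_assoc, hP, hP']; abel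
  have hx12sq : (P*a - P*a*P) * (P*a - P*a*P) = 0 := by
    simp only [mul_sub, sub_mul, mul_assoc, hP, hP']; abel
  have hx21 : P * (a*P - P*a*P) + (a*P - P*a*P) * P = a*P - P*a*P := by
    simp only [mul_sub, sub_mul, mul_assoc, hP, hP']; abel
  have hx21sq : (a*P - P*a*P) * (a*P - P*a*P) = 0 := by
    simp only [mul_sub, sub_mul, mul_assoc, hP, hP']; abel
  have hb22P : P * (a - P*a - a*P + P*a*P) = 0 := by
    simp only [mul_sub, sub_mul, mul_add, add_mul, mul_assoc, hP, hP']; abel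
  have hb22P' : (a - P*a - a*P + P*a*P) * P = 0 := by
    simp only [mul_sub, sub_mul, mul_add, add_mul, mul_assoc, hP, hP']; abel
  have hb11Q : (1 - P) * (P*a*P) = 0 := by
    simp only [mul_sub, sub_mul, mul_add, add_mul, mul_assoc, hP, hP', one_mul, mul_one]; abel
  have hb11Q' : (P*a*P) * (1 - P) = 0 := by
    simp only [mul_sub, sub_mul, mul_add, add_mul, mul_assoc, hP, hP', one_mul, mul_one]; abel
  -- off-diagonal components vanish
  have h12 : δ (P*a - P*a*P) = 0 := key12 _ hx12 hx12sq
  have h21 : δ (a*P - P*a*P) = 0 := key12 _ hx21 hx21sq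
  -- diagonal components
  have h11 := hE (1 - P) (P*a*P) hb11Q hb11Q'
  rw [hQ0] at h11
  simp only [smul_zero, zero_add, add_zero, op_sub, op_one, sub_smul, one_smul] at h11
  have hkey11 : ((m:ℤ)+n) • δ (P*a*P)
      = (m:ℤ) • (op P • δ (P*a*P)) + (n:ℤ) • (P • δ (P*a*P)) := by
    generalize δ (P*a*P) = u at h11 ⊢
    generalize op P • u = r at h11 ⊢
    generalize P • u = l at h11 ⊢
    linear_combination (norm := module) h11
  obtain ⟨h11r, h11l⟩ := keyC _ hkey11
  have h22 := hE P (a - P*a - a*P + P*a*P) hb22P hb22P'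
  rw [hDP] at h22
  simp only [smul_zero, zero_add, add_zero] at h22
  obtain ⟨h22r, h22l⟩ := keyB (δ (a - P*a - a*P + P*a*P)) h22
  -- assembly
  have hPa : P * a = P*a*P + (P*a - P*a*P) := by abel
  have haP : a * P = P*a*P + (a*P - P*a*P) := by abel
  have hda : a = (P*a*P + (P*a - P*a*P)) + ((a*P - P*a*P) + (a - P*a - a*P + P*a*P)) := by
    abel
  have hdPa : δ (P * a) = δ (P*a*P) := by
    rw [congrArg δ hPa, hadd, h12, add_zero]
  have hdaP : δ (a * P) = δ (P*a*P) := by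
    rw [congrArg δ haP, hadd, h21, add_zero]
  have hdA : δ a = δ (P*a*P) + δ (a - P*a - a*P + P*a*P) := by
    rw [congrArg δ hda, hadd, hadd, hadd, h12, h21, add_zero, zero_add]
  refine ⟨hdPa.trans hdaP.symm, ?_, ?_⟩
  · rw [hdaP, hdA, smul_add, h11r, h22r, add_zero]
  · rw [hdA, smul_add, smul_add, h11r, h22r, h11l, h22l, add_zero]
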